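/- Let $m$ be a positive integer, $K^* \in \mathbb{R}^{m\times m}$ an arbitrary matrix, $O \in \mathbb{R}^{m\times m}$ orthogonal, $L \in \mathbb{R}^{m\times m}$ real diagonal, and $K_U \in \mathbb{R}^{m\times m}$ diagonal with nonnegative diagonal entries. Define $X := O^\top \exp(L) O$, $B_1 := \exp(L) - O K^* O^\top$, $B_2 := X K^{*\top} - K^{*\top} X$, and $U := -K_U \exp(-L)\,\mathrm{diag}(B_1)$. Let $\mathcal{K} : \mathbb{R}^{m\times m} \to \mathbb{R}^{m\times m}$ be a linear map that maps skew-symmetric matrices to skew-symmetric matrices and is positive semidefinite with respect to the Frobenius inner product (i.e., $\mathrm{tr}(A^\top \mathcal{K}(A)) \ge 0$ for all $A$), and set $\Omega := \mathcal{K}\big((B_2 - B_2^\top)/2\big)$. Then $\mathrm{tr}\big((K^* - X)^\top (X\Omega - \Omega X + O^\top \exp(L)\, U\, O)\big) \ge 0$. -/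

import Mathlib

open Matrix

/-- the dissipation inequality at the heart of Lemma 3. -/
theorem stmt_12 (m : ℕ) (hm : 0 < m)
    (Kstar : Matrix (Fin m) (Fin m) ℝ)
    (O : Matrix (Fin m) (Fin m) ℝ) (hO : O * Oᵀ = 1)
    (L : Matrix (Fin m) (Fin m) ℝ) (hL : L.IsDiag)
    (KU : Matrix (Fin m) (Fin m) ℝ) (hKU : KU.IsDiag) (hKUpos : ∀ i, 0 ≤ KU i i)
    (X : Matrix (Fin m) (Fin m) ℝ) (hX : X = Oᵀ * NormedSpace.exp L * O)
    (B1 : Matrix (Fin m) (Fin m) ℝ) (hB1 : B1 = NormedSpace.exp L - O * Kstar * Oᵀ)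
    (B2 : Matrix (Fin m) (Fin m) ℝ) (hB2 : B2 = X * Kstarᵀ - Kstarᵀ * X)
    (U : Matrix (Fin m) (Fin m) ℝ)
    (hU : U = -(KU * NormedSpace.exp (-L) * Matrix.diagonal B1.diag))
    (𝒦 : Matrix (Fin m) (Fin m) ℝ →ₗ[ℝ] Matrix (Fin m) (Fin m) ℝ)
    (h𝒦skew : ∀ A : Matrix (Fin m) (Fin m) ℝ, Aᵀ = -A → (𝒦 A)ᵀ = -(𝒦 A))
    (h𝒦psd : ∀ A : Matrix (Fin m) (Fin m) ℝ, 0 ≤ (Aᵀ * 𝒦 A).trace)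
    (Ω : Matrix (Fin m) (Fin m) ℝ) (hΩ : Ω = 𝒦 ((1 / 2 : ℝ) • (B2 - B2ᵀ))) :
    0 ≤ ((Kstar - X)ᵀ * (X * Ω - Ω * X + Oᵀ * NormedSpace.exp L * U * O)).trace := by
  have hOtO : Oᵀ * O = 1 := mul_eq_one_comm.mp hO
  have hLd : Matrix.diagonal L.diag = L := hL.diagonal_diag
  have hKUd : Matrix.diagonal KU.diag = KU := hKU.diagonal_diag
  have hLT : Lᵀ = L := by
    conv_lhs => rw [← hLd]
    rw [Matrix.diagonal_transpose, hLd]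
  have hET : (NormedSpace.exp L)ᵀ = NormedSpace.exp L := by
    rw [← Matrix.exp_transpose, hLT]
  have hXT : Xᵀ = X := by
    rw [hX]
    simp [Matrix.transpose_mul, Matrix.mul_assoc, hET]
  have hEinv : NormedSpace.exp L * NormedSpace.exp (-L) = 1 := by
    rw [← Matrix.exp_add_of_commute L (-L) (Commute.refl L).neg_right, add_neg_cancel,
      NormedSpace.exp_zero]
  have hEd : NormedSpace.exp L = Matrix.diagonal (NormedSpace.exp L.diag) := by
    conv_lhs => rw [← hLd]
    rw [Matrix.exp_diagonal]
  have hcomm : NormedSpace.exp L * KU = KU * NormedSpace.exp L := by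
    conv_lhs => rw [hEd, ← hKUd]
    conv_rhs => rw [hEd, ← hKUd]
    rw [Matrix.diagonal_mul_diagonal, Matrix.diagonal_mul_diagonal]
    congr 1
    funext i
    simp [mul_comm]
  -- exp L * U = -(KU * diagonal B1.diag)
  have hEU : NormedSpace.exp L * U = -(KU * Matrix.diagonal B1.diag) := by
    rw [hU, mul_neg]
    congr 1
    rw [← Matrix.mul_assoc, ← Matrix.mul_assoc, hcomm, Matrix.mul_assoc KU, hEinv, mul_one]
  have hQ : Oᵀ * NormedSpace.exp L * U * O
      = -(Oᵀ * (KU * Matrix.diagonal B1.diag) * O) := by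
    rw [Matrix.mul_assoc Oᵀ, hEU, mul_neg, neg_mul]
  have hOXO : O * X * Oᵀ = NormedSpace.exp L := by
    rw [hX]
    calc O * (Oᵀ * NormedSpace.exp L * O) * Oᵀ
        = (O * Oᵀ) * NormedSpace.exp L * (O * Oᵀ) := by noncomm_ring
      _ = NormedSpace.exp L := by rw [hO]; simp
  have hOB : O * (Kstar - X)ᵀ * Oᵀ = -B1ᵀ := by
    have h1 : O * (Kstar - X)ᵀ * Oᵀ = O * Kstarᵀ * Oᵀ - O * X * Oᵀ := by
      rw [Matrix.transpose_sub, hXT]; noncomm_ring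
    rw [h1, hOXO, hB1, Matrix.transpose_sub, hET, Matrix.transpose_mul, Matrix.transpose_mul,
      Matrix.transpose_transpose]
    noncomm_ring
  -- trace of the U-part
  have key2 : ((Kstar - X)ᵀ * (Oᵀ * (KU * Matrix.diagonal B1.diag) * O)).trace
      = -((B1ᵀ * (KU * Matrix.diagonal B1.diag)).trace) := by
    have h1 : (Kstar - X)ᵀ * (Oᵀ * (KU * Matrix.diagonal B1.diag) * O)
        = ((Kstar - X)ᵀ * Oᵀ) * ((KU * Matrix.diagonal B1.diag) * O) := by noncomm_ring
    rw [h1, Matrix.trace_mul_comm]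
    have h2 : (KU * Matrix.diagonal B1.diag) * O * ((Kstar - X)ᵀ * Oᵀ)
        = (KU * Matrix.diagonal B1.diag) * (O * (Kstar - X)ᵀ * Oᵀ) := by noncomm_ring
    rw [h2, hOB, mul_neg, Matrix.trace_neg, Matrix.trace_mul_comm]
  have hM : KU * Matrix.diagonal B1.diag = Matrix.diagonal (fun j => KU j j * B1 j j) := by
    ext i j
    rw [Matrix.mul_diagonal]
    by_cases h : i = j
    · subst h; simp [Matrix.diag]
    · simp [Matrix.diagonal_apply_ne _ h, hKU h]
  have hT2pos : 0 ≤ (B1ᵀ * (KU * Matrix.diagonal B1.diag)).trace := by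
    rw [hM, Matrix.trace]
    apply Finset.sum_nonneg
    intro i _
    simp only [Matrix.diag_apply, Matrix.mul_diagonal, Matrix.transpose_apply]
    nlinarith [hKUpos i, sq_nonneg (B1 i i)]
  -- trace of the Ω-part
  have hPXXP : (Kstar - X)ᵀ * X - X * (Kstar - X)ᵀ = -B2 := by
    rw [Matrix.transpose_sub, hXT, hB2]; noncomm_ring
  have hT1 : ((Kstar - X)ᵀ * (X * Ω - Ω * X)).trace = (-B2 * Ω).trace := by
    rw [← hPXXP]
    rw [Matrix.mul_sub, Matrix.trace_sub, Matrix.sub_mul, Matrix.trace_sub]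
    congr 1
    · rw [← Matrix.mul_assoc]
    · rw [Matrix.trace_mul_comm (Kstar - X)ᵀ (Ω * X), Matrix.mul_assoc,
        Matrix.trace_mul_comm Ω]
  have hAskew : ((1 / 2 : ℝ) • (B2 - B2ᵀ))ᵀ = -((1 / 2 : ℝ) • (B2 - B2ᵀ)) := by
    rw [Matrix.transpose_smul, Matrix.transpose_sub, Matrix.transpose_transpose]
    module
  have hΩskew : Ωᵀ = -Ω := by
    rw [hΩ]; exact h𝒦skew _ hAskew
  have hB2t : (B2ᵀ * Ω).trace = -((B2 * Ω).trace) := by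
    rw [← Matrix.trace_transpose (B2ᵀ * Ω), Matrix.transpose_mul, Matrix.transpose_transpose,
      hΩskew, Matrix.neg_mul, Matrix.trace_neg, Matrix.trace_mul_comm]
  have hA : (((1 / 2 : ℝ) • (B2 - B2ᵀ))ᵀ * Ω).trace = (-B2 * Ω).trace := by
    rw [Matrix.transpose_smul, Matrix.transpose_sub, Matrix.transpose_transpose,
      Matrix.smul_mul, Matrix.sub_mul, Matrix.trace_smul, Matrix.trace_sub, hB2t,
      Matrix.neg_mul, Matrix.trace_neg, smul_eq_mul]
    ring
  have hT1pos : 0 ≤ (-B2 * Ω).trace := by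
    rw [← hA, hΩ]
    exact h𝒦psd _
  -- combine
  rw [mul_add, Matrix.trace_add, hQ, mul_neg, Matrix.trace_neg, hT1, key2, neg_neg]
  exact add_nonneg hT1pos hT2pos
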